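/- Let k = 4m+3 for a non-negative integer m and let f(x,z) = floor((x+z)/k). Consider the impartial game on states {(x,y,z) : x,y,z ∈ Z_{≥0}, y ≤ f(x,z)} where from (x,y,z) one may move to: (u, min(f(u,z), y), z) for any u < x; (x, v, z) for any v < y; or (x, min(y, f(x,w)), w) for any w < z. Then (x,y,z) is a P-position (previous-player win) if and only if x ⊕ y ⊕ z = 0. -/

import Mathlib

def gg (z b : ℕ) : ℕ := (z ^^^ b) &&& z

lemma xor_div2 (a b : ℕ) : (a ^^^ b) / 2 = a / 2 ^^^ b / 2 := by
  apply Nat.eq_of_testBit_eq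
  intro i
  simp [← Nat.testBit_add_one, Nat.testBit_xor]

lemma land_div2 (a b : ℕ) : (a &&& b) / 2 = a / 2 &&& b / 2 := by
  apply Nat.eq_of_testBit_eq
  intro i
  simp [← Nat.testBit_add_one, Nat.testBit_land]

lemma land_mod2 (a b : ℕ) : (a &&& b) % 2 = (a % 2) * (b % 2) := by
  have key : (a &&& b) % 2 = 1 ↔ (a % 2 = 1 ∧ b % 2 = 1) := by
    rw [Nat.mod_two_eq_one_iff_testBit_zero, Nat.mod_two_eq_one_iff_testBit_zero,
      Nat.mod_two_eq_one_iff_testBit_zero, Nat.testBit_land, Bool.and_eq_true]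
  have h3 : (a &&& b) % 2 = 0 ∨ (a &&& b) % 2 = 1 := Nat.mod_two_eq_zero_or_one _
  rcases Nat.mod_two_eq_zero_or_one a with h1 | h1 <;>
    rcases Nat.mod_two_eq_zero_or_one b with h2 | h2 <;> rw [h1, h2] <;>
    [skip; skip; skip; exact key.mpr ⟨h1, h2⟩] <;>
    · have h4 : ¬ ((a &&& b) % 2 = 1) := fun hh => by
        obtain ⟨c1, c2⟩ := key.mp hh; omega
      omega

lemma addDecomp' : ∀ s a b : ℕ, a + b = s → a + b = (a ^^^ b) + 2 * (a &&& b) := by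
  intro s
  induction s using Nat.strong_induction_on with
  | _ s IH =>
  intro a b hs
  rcases Nat.eq_zero_or_pos (a + b) with h0 | h0
  · have ha : a = 0 := by omega
    have hb : b = 0 := by omega
    subst ha hb; rfl
  · have IH2 := IH (a / 2 + b / 2) (by omega) (a / 2) (b / 2) rfl
    have e1 : (a ^^^ b) / 2 = a / 2 ^^^ b / 2 := xor_div2 a b
    have e2 : (a &&& b) / 2 = a / 2 &&& b / 2 := land_div2 a b
    have e3 : (a ^^^ b) % 2 = (a + b) % 2 := Nat.xor_mod_two_eq
    have e4 : (a &&& b) % 2 = (a % 2) * (b % 2) := land_mod2 a b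
    have h1 : a % 2 * (b % 2) ≤ 1 := by
      rcases Nat.mod_two_eq_zero_or_one a with h1 | h1 <;>
        rcases Nat.mod_two_eq_zero_or_one b with h2 | h2 <;> rw [h1, h2] <;> norm_num
    have h2 : a % 2 + b % 2 = (a + b) % 2 + 2 * (a % 2 * (b % 2)) := by
      rcases Nat.mod_two_eq_zero_or_one a with h1 | h1 <;>
        rcases Nat.mod_two_eq_zero_or_one b with h2 | h2 <;> rw [h1, h2] <;> omega
    omega

lemma addDecomp (a b : ℕ) : a + b = (a ^^^ b) + 2 * (a &&& b) :=
  addDecomp' (a + b) a b rfl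

lemma gg_rec (z b : ℕ) : gg z b = 2 * gg (z / 2) (b / 2) + (z % 2) * (1 - b % 2) := by
  unfold gg
  have e2 : ((z ^^^ b) &&& z) / 2 = (z/2 ^^^ b/2) &&& (z/2) := by
    rw [land_div2, xor_div2]
  have e4 : ((z ^^^ b) &&& z) % 2 = ((z ^^^ b) % 2) * (z % 2) := land_mod2 _ z
  rw [Nat.xor_mod_two_eq] at e4
  have p1 : ((z + b) % 2) * (z % 2) = (z % 2) * (1 - b % 2) := by
    rcases Nat.mod_two_eq_zero_or_one z with h1 | h1 <;>
      rcases Nat.mod_two_eq_zero_or_one b with h2 | h2 <;> rw [h1, h2] <;> omega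
  rw [p1] at e4
  omega


lemma gg_zero (z : ℕ) : gg z 0 = z := by simp [gg]

lemma lemC (n : ℕ) (hn : n % 2 = 1) :
    ∀ b z a, n * b ≤ gg z b → a < b → n * a + n < gg z a := by
  intro b
  induction b using Nat.strong_induction_on with
  | _ b IH =>
  intro z a hb hab
  have rb := gg_rec z b
  have ra := gg_rec z a
  have hnb : n * b = 2 * (n * (b / 2)) + n * (b % 2) := by
    conv_lhs => rw [← Nat.div_add_mod b 2]
    ring
  have hna : n * a = 2 * (n * (a / 2)) + n * (a % 2) := by
    conv_lhs => rw [← Nat.div_add_mod a 2]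
    ring
  have hcb : (z % 2) * (1 - b % 2) ≤ 1 := by
    rcases Nat.mod_two_eq_zero_or_one z with h | h <;> rw [h] <;> omega
  have hca : (z % 2) * (1 - a % 2) ≤ 1 := by
    rcases Nat.mod_two_eq_zero_or_one z with h | h <;> rw [h] <;> omega
  have hnb2 : n * (b % 2) ≤ n := by
    rcases Nat.mod_two_eq_zero_or_one b with h | h <;> rw [h] <;> omega
  have hna2 : n * (a % 2) ≤ n := by
    rcases Nat.mod_two_eq_zero_or_one a with h | h <;> rw [h] <;> omega
  have hb' : n * (b / 2) ≤ gg (z / 2) (b / 2) := by omega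
  rcases Nat.lt_or_ge (a / 2) (b / 2) with hcase | hcase
  · have IH2 := IH (b / 2) (by omega) (z / 2) (a / 2) hb' hcase
    omega
  · -- a / 2 = b / 2, a even, b odd
    have h1 : a / 2 = b / 2 := by omega
    have ha2 : a % 2 = 0 := by omega
    have hb2 : b % 2 = 1 := by omega
    have e1 : n * (b % 2) = n := by rw [hb2]; omega
    have e2 : n * (a % 2) = 0 := by rw [ha2]; omega
    have e3 : (z % 2) * (1 - b % 2) = 0 := by rw [hb2]; omega
    have e4 : (z % 2) * (1 - a % 2) = z % 2 := by rw [ha2]; omega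
    rw [h1] at ra hna
    omega

lemma lemE (n : ℕ) (hn : n % 2 = 1) :
    ∀ y z, gg z y < n * y → ∃ b, b < y ∧ n * b ≤ gg z b ∧ gg z b ≤ n * b + n := by
  intro y
  induction y using Nat.strong_induction_on with
  | _ y IH =>
  intro z hy
  rcases Nat.eq_zero_or_pos y with h0 | h0
  · subst h0; simp at hy
  have ry := gg_rec z y
  have hny : n * y = 2 * (n * (y / 2)) + n * (y % 2) := by
    conv_lhs => rw [← Nat.div_add_mod y 2]
    ring
  have hcy : (z % 2) * (1 - y % 2) ≤ 1 := by
    rcases Nat.mod_two_eq_zero_or_one z with h | h <;> rw [h] <;> omega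
  have hny2 : n * (y % 2) ≤ n := by
    rcases Nat.mod_two_eq_zero_or_one y with h | h <;> rw [h] <;> omega
  by_cases hbd : y % 2 = 1 ∧ n * (y / 2) ≤ gg (z / 2) (y / 2)
  · -- boundary case : take b = 2 * (y / 2)
    obtain ⟨hy1, hy2⟩ := hbd
    refine ⟨2 * (y / 2), by omega, ?_, ?_⟩ <;>
    · have rb := gg_rec z (2 * (y / 2))
      have d1 : 2 * (y / 2) / 2 = y / 2 := by omega
      have d2 : 2 * (y / 2) % 2 = 0 := by omega
      rw [d1, d2] at rb
      have e3 : (z % 2) * (1 - 0) = z % 2 := by omega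
      rw [e3] at rb
      have hnb : n * (2 * (y / 2)) = 2 * (n * (y / 2)) := by ring
      have e1 : n * (y % 2) = n := by rw [hy1]; omega
      have e4 : (z % 2) * (1 - y % 2) = 0 := by rw [hy1]; omega
      omega
  · have hy' : gg (z / 2) (y / 2) < n * (y / 2) := by
      rcases Nat.mod_two_eq_zero_or_one y with h | h
      · have e1 : n * (y % 2) = 0 := by rw [h]; omega
        omega
      · have e1 : n * (y % 2) = n := by rw [h]; omega
        have := hbd
        by_contra hcon
        exact hbd ⟨h, by omega⟩
    rcases Nat.eq_zero_or_pos (y / 2) with hy0 | hy0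
    · exfalso
      rw [hy0, gg_zero] at hy'
      omega
    · obtain ⟨b', hb'y, hbl, hbu⟩ := IH (y / 2) (by omega) (z / 2) hy'
      by_cases hd : 2 * gg (z / 2) b' ≥ 2 * (n * b') + n + 1
      · refine ⟨2 * b' + 1, by omega, ?_, ?_⟩ <;>
        · have rb := gg_rec z (2 * b' + 1)
          have d1 : (2 * b' + 1) / 2 = b' := by omega
          have d2 : (2 * b' + 1) % 2 = 1 := by omega
          rw [d1, d2] at rb
          have e3 : (z % 2) * (1 - 1) = 0 := by omega
          rw [e3] at rb
          have hnb : n * (2 * b' + 1) = 2 * (n * b') + n := by ring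
          omega
      · refine ⟨2 * b', by omega, ?_, ?_⟩ <;>
        · have rb := gg_rec z (2 * b')
          have d1 : 2 * b' / 2 = b' := by omega
          have d2 : 2 * b' % 2 = 0 := by omega
          rw [d1, d2] at rb
          have e3 : (z % 2) * (1 - 0) = z % 2 := by omega
          rw [e3] at rb
          have hnb : n * (2 * b') = 2 * (n * b') := by ring
          omega


lemma sum_gg (z b : ℕ) : (z ^^^ b) + z = b + 2 * gg z b := by
  unfold gg
  have h := addDecomp (z ^^^ b) z
  have e : (z ^^^ b) ^^^ z = b := by rw [Nat.xor_comm z b, xor_cancel_right]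
  rw [e] at h
  exact h

lemma div_eq_of (k S b : ℕ) (hk : 0 < k) (h1 : k * b ≤ S) (h2 : S < k * (b + 1)) :
    S / k = b := by
  have l1 : b ≤ S / k := (Nat.le_div_iff_mul_le hk).mpr (by rw [Nat.mul_comm]; omega)
  have l2 : S / k < b + 1 := (Nat.div_lt_iff_lt_mul hk).mpr (by rw [Nat.mul_comm]; omega)
  omega

/-- Moves of the three-dimensional chocolate-bar game with `f x z = (x + z) / k`. -/
def moveF (k : ℕ) (p : ℕ × ℕ × ℕ) : Set (ℕ × ℕ × ℕ) :=
  {q | (∃ u < p.1, q = (u, min ((u + p.2.2) / k) p.2.1, p.2.2)) ∨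
       (∃ v < p.2.1, q = (p.1, v, p.2.2)) ∨
       (∃ w < p.2.2, q = (p.1, min p.2.1 ((p.1 + w) / k), w))}

/-- `p` is a P-position: every move leads to a non-P-position (so the terminal
position, having no moves, is a P-position). -/
def PPos (k : ℕ) (p : ℕ × ℕ × ℕ) : Prop :=
  ∀ q ∈ moveF k p, ¬ PPos k q
termination_by p.1 + p.2.1 + p.2.2
decreasing_by
  rename_i hq
  simp only [moveF, Set.mem_setOf_eq] at hq
  rcases hq with ⟨u, hu, rfl⟩ | ⟨v, hv, rfl⟩ | ⟨w, hw, rfl⟩ <;> simp <;> omega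

lemma key (m : ℕ) : ∀ s x y z : ℕ, x + y + z = s → (4 * m + 3) * y ≤ x + z →
    (PPos (4 * m + 3) (x, y, z) ↔ x = y ^^^ z) := by
  intro s
  induction s using Nat.strong_induction_on with
  | _ s IH =>
  intro x y z hs hky
  have hk : 0 < 4 * m + 3 := by omega
  constructor
  · -- PPos → x = y ^^^ z
    intro hP
    rw [PPos] at hP
    by_contra hne
    have ht : x ^^^ y ^^^ z ≠ 0 := by
      intro h
      rw [Nat.xor_assoc, xor_eq_zero_iff] at h
      exact hne h
    rcases Nat.xor_trichotomy ht with h1 | h2 | h3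
    · -- y ^^^ z < x : reduce first coordinate
      by_cases hc : (4 * m + 3) * y ≤ (y ^^^ z) + z
      · -- straightforward nim move to (y ^^^ z, y, z)
        have hmin : min (((y ^^^ z) + z) / (4 * m + 3)) y = y :=
          min_eq_right ((Nat.le_div_iff_mul_le hk).mpr (by rw [Nat.mul_comm]; omega))
        have hmem : ((y ^^^ z : ℕ), y, z) ∈ moveF (4 * m + 3) (x, y, z) := by
          simp only [moveF, Set.mem_setOf_eq]
          exact Or.inl ⟨y ^^^ z, h1, by rw [hmin]⟩
        exact hP _ hmem (((IH ((y ^^^ z) + y + z) (by omega) _ _ _ rfl hc)).mpr rfl)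
      · -- diagonal move
        push_neg at hc
        have hsy : (y ^^^ z) + z = y + 2 * gg z y := by
          rw [Nat.xor_comm]; exact sum_gg z y
        have hgy : gg z y < (2 * m + 1) * y := by
          have e : (4 * m + 3) * y = 2 * ((2 * m + 1) * y) + y := by ring
          omega
        obtain ⟨b, hby, hbl, hbu⟩ := lemE (2 * m + 1) (by omega) y z hgy
        have hsb : (z ^^^ b) + z = b + 2 * gg z b := sum_gg z b
        have eb : (4 * m + 3) * b = 2 * ((2 * m + 1) * b) + b := by ring
        have eb1 : (4 * m + 3) * (b + 1) = 2 * ((2 * m + 1) * b) + b + (4 * m + 3) := by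
          ring
        have hlow : (4 * m + 3) * b ≤ (z ^^^ b) + z := by omega
        have hhigh : (z ^^^ b) + z < (4 * m + 3) * (b + 1) := by omega
        have hdiv : ((z ^^^ b) + z) / (4 * m + 3) = b :=
          div_eq_of _ _ _ hk hlow hhigh
        have hky2 : (4 * m + 3) * (b + 1) ≤ (4 * m + 3) * y :=
          Nat.mul_le_mul_left _ (by omega)
        have hub : (z ^^^ b) < x := by omega
        have hmem : ((z ^^^ b : ℕ), b, z) ∈ moveF (4 * m + 3) (x, y, z) := by
          simp only [moveF, Set.mem_setOf_eq]
          exact Or.inl ⟨z ^^^ b, hub, by rw [hdiv, min_eq_left (le_of_lt hby)]⟩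
        refine hP _ hmem ?_
        refine (IH ((z ^^^ b) + b + z) (by omega) _ _ _ rfl (by omega)).mpr ?_
        rw [Nat.xor_comm]
    · -- z ^^^ x < y : reduce second coordinate
      have hmem : (x, (z ^^^ x : ℕ), z) ∈ moveF (4 * m + 3) (x, y, z) := by
        simp only [moveF, Set.mem_setOf_eq]
        exact Or.inr (Or.inl ⟨z ^^^ x, h2, rfl⟩)
      have hb : (4 * m + 3) * (z ^^^ x) ≤ x + z := by
        have := Nat.mul_le_mul_left (4 * m + 3) (show z ^^^ x ≤ y by omega)
        omega
      refine hP _ hmem ?_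
      refine (IH (x + (z ^^^ x) + z) (by omega) _ _ _ rfl hb).mpr ?_
      rw [Nat.xor_comm z x, xor_cancel_right]
    · -- x ^^^ y < z : reduce third coordinate
      by_cases hc : (4 * m + 3) * y ≤ x + (x ^^^ y)
      · have hmin : min y ((x + (x ^^^ y)) / (4 * m + 3)) = y :=
          min_eq_left ((Nat.le_div_iff_mul_le hk).mpr (by rw [Nat.mul_comm]; omega))
        have hmem : (x, y, (x ^^^ y : ℕ)) ∈ moveF (4 * m + 3) (x, y, z) := by
          simp only [moveF, Set.mem_setOf_eq]
          exact Or.inr (Or.inr ⟨x ^^^ y, h3, by rw [hmin]⟩)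
        refine hP _ hmem ?_
        refine (IH (x + y + (x ^^^ y)) (by omega) _ _ _ rfl hc).mpr ?_
        rw [Nat.xor_comm y (x ^^^ y), xor_cancel_right]
      · push_neg at hc
        have hsy : (x ^^^ y) + x = y + 2 * gg x y := sum_gg x y
        have hgy : gg x y < (2 * m + 1) * y := by
          have e : (4 * m + 3) * y = 2 * ((2 * m + 1) * y) + y := by ring
          omega
        obtain ⟨b, hby, hbl, hbu⟩ := lemE (2 * m + 1) (by omega) y x hgy
        have hsb : (x ^^^ b) + x = b + 2 * gg x b := sum_gg x b
        have eb : (4 * m + 3) * b = 2 * ((2 * m + 1) * b) + b := by ring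
        have eb1 : (4 * m + 3) * (b + 1) = 2 * ((2 * m + 1) * b) + b + (4 * m + 3) := by
          ring
        have hlow : (4 * m + 3) * b ≤ x + (x ^^^ b) := by omega
        have hhigh : x + (x ^^^ b) < (4 * m + 3) * (b + 1) := by omega
        have hdiv : (x + (x ^^^ b)) / (4 * m + 3) = b :=
          div_eq_of _ _ _ hk hlow hhigh
        have hky2 : (4 * m + 3) * (b + 1) ≤ (4 * m + 3) * y :=
          Nat.mul_le_mul_left _ (by omega)
        have hwz : (x ^^^ b) < z := by omega
        have hmem : (x, b, (x ^^^ b : ℕ)) ∈ moveF (4 * m + 3) (x, y, z) := by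
          simp only [moveF, Set.mem_setOf_eq]
          exact Or.inr (Or.inr ⟨x ^^^ b, hwz, by rw [hdiv, min_eq_right (le_of_lt hby)]⟩)
        refine hP _ hmem ?_
        refine (IH (x + b + (x ^^^ b)) (by omega) _ _ _ rfl (by omega)).mpr ?_
        rw [Nat.xor_comm x b, xor_cancel_left]
  · -- x = y ^^^ z → PPos
    intro hx
    rw [PPos]
    intro q hq hPq
    simp only [moveF, Set.mem_setOf_eq] at hq
    rcases hq with ⟨u, hu, rfl⟩ | ⟨v, hv, rfl⟩ | ⟨w, hw, rfl⟩
    · -- move in first coordinate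
      have hboard : (2 * m + 1) * y ≤ gg z y := by
        have hsy : (y ^^^ z) + z = y + 2 * gg z y := by
          rw [Nat.xor_comm]; exact sum_gg z y
        have e : (4 * m + 3) * y = 2 * ((2 * m + 1) * y) + y := by ring
        omega
      have hM1 : min ((u + z) / (4 * m + 3)) y ≤ (u + z) / (4 * m + 3) := min_le_left _ _
      have hM2 : min ((u + z) / (4 * m + 3)) y ≤ y := min_le_right _ _
      have hdm : (u + z) / (4 * m + 3) * (4 * m + 3) ≤ u + z := Nat.div_mul_le_self _ _
      have hqb : (4 * m + 3) * (min ((u + z) / (4 * m + 3)) y) ≤ u + z := by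
        calc (4 * m + 3) * (min ((u + z) / (4 * m + 3)) y)
            ≤ (4 * m + 3) * ((u + z) / (4 * m + 3)) := Nat.mul_le_mul_left _ hM1
          _ = (u + z) / (4 * m + 3) * (4 * m + 3) := Nat.mul_comm _ _
          _ ≤ u + z := hdm
      have hval := (IH (u + min ((u + z) / (4 * m + 3)) y + z) (by omega) _ _ _ rfl
        hqb).mp hPq
      by_cases hcase : y ≤ (u + z) / (4 * m + 3)
      · rw [min_eq_right hcase] at hval
        rw [← hx] at hval
        omega
      · push_neg at hcase
        rw [min_eq_left (le_of_lt hcase)] at hval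
        -- hval : u = (u + z) / (4 * m + 3) ^^^ z
        set b := (u + z) / (4 * m + 3) with hbdef
        have hu2 : u = z ^^^ b := by rw [hval, Nat.xor_comm]
        have hsb : (z ^^^ b) + z = b + 2 * gg z b := sum_gg z b
        have eb : b * (4 * m + 3) = 2 * ((2 * m + 1) * b) + b := by ring
        have eb1 : (b + 1) * (4 * m + 3) = 2 * ((2 * m + 1) * b) + b + (4 * m + 3) := by
          ring
        have hlow : b * (4 * m + 3) ≤ u + z := Nat.div_mul_le_self _ _
        have hhigh : u + z < (b + 1) * (4 * m + 3) :=
          (Nat.div_lt_iff_lt_mul hk).mp (by omega)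
        have hdiag : (2 * m + 1) * b ≤ gg z b ∧ gg z b ≤ (2 * m + 1) * b + (2 * m + 1) := by
          rw [hu2] at hlow hhigh
          omega
        have hC := lemC (2 * m + 1) (by omega) y z b hboard hcase
        omega
    · -- move in second coordinate
      have hqb : (4 * m + 3) * v ≤ x + z := by
        have := Nat.mul_le_mul_left (4 * m + 3) (show v ≤ y by omega)
        omega
      have hval := (IH (x + v + z) (by omega) _ _ _ rfl hqb).mp hPq
      rw [hx] at hval
      have : y = v := Nat.xor_left_inj.mp hval
      omega
    · -- move in third coordinate
      have hz2 : x ^^^ y = z := by rw [hx, Nat.xor_comm y z, xor_cancel_right]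
      have hboard : (2 * m + 1) * y ≤ gg x y := by
        have hsy : (x ^^^ y) + x = y + 2 * gg x y := sum_gg x y
        have e : (4 * m + 3) * y = 2 * ((2 * m + 1) * y) + y := by ring
        omega
      have hM1 : min y ((x + w) / (4 * m + 3)) ≤ (x + w) / (4 * m + 3) := min_le_right _ _
      have hM2 : min y ((x + w) / (4 * m + 3)) ≤ y := min_le_left _ _
      have hdm : (x + w) / (4 * m + 3) * (4 * m + 3) ≤ x + w := Nat.div_mul_le_self _ _
      have hqb : (4 * m + 3) * (min y ((x + w) / (4 * m + 3))) ≤ x + w := by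
        calc (4 * m + 3) * (min y ((x + w) / (4 * m + 3)))
            ≤ (4 * m + 3) * ((x + w) / (4 * m + 3)) := Nat.mul_le_mul_left _ hM1
          _ = (x + w) / (4 * m + 3) * (4 * m + 3) := Nat.mul_comm _ _
          _ ≤ x + w := hdm
      have hval := (IH (x + min y ((x + w) / (4 * m + 3)) + w) (by omega) _ _ _ rfl
        hqb).mp hPq
      by_cases hcase : y ≤ (x + w) / (4 * m + 3)
      · rw [min_eq_left hcase] at hval
        have : y ^^^ w = y ^^^ z := by rw [← hval, hx]
        have := Nat.xor_right_inj.mp this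
        omega
      · push_neg at hcase
        rw [min_eq_right (le_of_lt hcase)] at hval
        set b := (x + w) / (4 * m + 3) with hbdef
        have hw2 : x ^^^ b = w := by rw [hval, Nat.xor_comm b w, xor_cancel_right]
        have hsb : (x ^^^ b) + x = b + 2 * gg x b := sum_gg x b
        have eb : b * (4 * m + 3) = 2 * ((2 * m + 1) * b) + b := by ring
        have eb1 : (b + 1) * (4 * m + 3) = 2 * ((2 * m + 1) * b) + b + (4 * m + 3) := by
          ring
        have hlow : b * (4 * m + 3) ≤ x + w := Nat.div_mul_le_self _ _
        have hhigh : x + w < (b + 1) * (4 * m + 3) :=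
          (Nat.div_lt_iff_lt_mul hk).mp (by omega)
        have hdiag : (2 * m + 1) * b ≤ gg x b ∧ gg x b ≤ (2 * m + 1) * b + (2 * m + 1) := by
          rw [← hw2] at hlow hhigh
          omega
        have hC := lemC (2 * m + 1) (by omega) y x b hboard hcase
        omega

theorem stmt_13 (m x y z : ℕ)
    (hval : y ≤ (x + z) / (4 * m + 3)) :
    PPos (4 * m + 3) (x, y, z) ↔ x ^^^ y ^^^ z = 0 := by
  have hk : 0 < 4 * m + 3 := by omega
  have hb : (4 * m + 3) * y ≤ x + z := by
    have := (Nat.le_div_iff_mul_le hk).mp hval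
    rw [Nat.mul_comm] at this
    exact this
  rw [key m (x + y + z) x y z rfl hb, Nat.xor_assoc, xor_eq_zero_iff]
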